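/- Let f be a submodular function on a finite ground set V and let X ⊆ V. Define the vector ĝ_X ∈ ℝ^V by ĝ_X(j) = f(j | X \ {j}) for j ∈ X and ĝ_X(j) = f(j | ∅) for j ∉ X. Then ĝ_X is a supergradient of f at X, i.e., f(Y) − ĝ_X(Y) ≤ f(X) − ĝ_X(X) for all Y ⊆ V. -/

import Mathlib

private lemma margA {V : Type*} [DecidableEq V] (f : Finset V → ℝ)
    (hf : ∀ S T : Finset V, f S + f T ≥ f (S ∪ T) + f (S ∩ T))
    {A B : Finset V} (hAB : A ⊆ B) {j : V} (hj : j ∉ B) :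
    f (insert j B) - f B ≤ f (insert j A) - f A := by
  have h := hf (insert j A) B
  have h1 : insert j A ∪ B = insert j B := by
    rw [Finset.insert_union, Finset.union_eq_right.mpr hAB]
  have h2 : insert j A ∩ B = A := by
    ext x
    simp only [Finset.mem_inter, Finset.mem_insert]
    constructor
    · rintro ⟨h | h, hB⟩
      · exact absurd (h ▸ hB) hj
      · exact h
    · exact fun h => ⟨Or.inr h, hAB h⟩
  rw [h1, h2] at h
  linarith

private lemma growB {V : Type*} [DecidableEq V] (f : Finset V → ℝ)
    (hf : ∀ S T : Finset V, f S + f T ≥ f (S ∪ T) + f (S ∩ T))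
    (C : Finset V) :
    ∀ D : Finset V, Disjoint C D → f (C ∪ D) - f C ≤ ∑ j ∈ D, (f {j} - f ∅) := by
  intro D
  induction D using Finset.induction_on with
  | empty => simp
  | @insert j D hjD ih =>
    intro hdisj
    have hdisj' : Disjoint C D := hdisj.mono_right (Finset.subset_insert _ _)
    have hjC : j ∉ C := fun h => (Finset.disjoint_left.mp hdisj h (Finset.mem_insert_self _ _))
    have hjCD : j ∉ C ∪ D := by simp [hjC, hjD]
    have h1 : C ∪ insert j D = insert j (C ∪ D) := by
      ext x; simp [or_left_comm, or_comm]
    have h2 := margA f hf (Finset.empty_subset (C ∪ D)) hjCD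
    rw [LawfulSingleton.insert_empty_eq] at h2
    rw [h1, Finset.sum_insert hjD]
    have := ih hdisj'
    linarith

private lemma growC {V : Type*} [DecidableEq V] (f : Finset V → ℝ)
    (hf : ∀ S T : Finset V, f S + f T ≥ f (S ∪ T) + f (S ∩ T))
    (X : Finset V) :
    ∀ D : Finset V, D ⊆ X → ∑ j ∈ D, (f X - f (X.erase j)) ≤ f X - f (X \ D) := by
  intro D
  induction D using Finset.induction_on with
  | empty => simp
  | @insert j D hjD ih =>
    intro hsub
    have hjX : j ∈ X := hsub (Finset.mem_insert_self _ _)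
    have hDX : D ⊆ X := (Finset.subset_insert _ _).trans hsub
    have hjXD : j ∈ X \ D := Finset.mem_sdiff.mpr ⟨hjX, hjD⟩
    have h1 : X \ insert j D = (X \ D).erase j := by
      ext x; simp [Finset.mem_sdiff, Finset.mem_erase, not_or]; tauto
    have hA : (X \ D).erase j ⊆ X.erase j := by
      intro x hx
      rw [Finset.mem_erase] at hx ⊢
      exact ⟨hx.1, (Finset.mem_sdiff.mp hx.2).1⟩
    have hjB : j ∉ X.erase j := Finset.notMem_erase _ _
    have h2 := margA f hf hA hjB
    rw [Finset.insert_erase hjX, Finset.insert_erase hjXD] at h2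
    rw [Finset.sum_insert hjD, h1]
    have := ih hDX
    linarith

/-- The "grow" supergradient `ĝ_X`, with `ĝ_X j = f(j | X \ {j})` for
`j ∈ X` and `ĝ_X j = f(j | ∅)` for `j ∉ X`, is a supergradient of `f` at `X`. -/
theorem grow_supergradient
    {V : Type*} [Fintype V] [DecidableEq V]
    (f : Finset V → ℝ)
    (hf : ∀ S T : Finset V, f S + f T ≥ f (S ∪ T) + f (S ∩ T))
    (X : Finset V) (g : V → ℝ)
    (hg : ∀ j : V, g j =
      if j ∈ X then f (insert j (X.erase j)) - f (X.erase j)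
      else f (insert j ∅) - f ∅) :
    ∀ Y : Finset V, f Y - (∑ i ∈ Y, g i) ≤ f X - (∑ i ∈ X, g i) := by
  intro Y
  -- decompose sums
  have hY : f Y - f (X ∩ Y) ≤ ∑ j ∈ Y \ X, (f {j} - f ∅) := by
    have hdisj : Disjoint (X ∩ Y) (Y \ X) := by
      rw [Finset.disjoint_left]; intro a ha hb
      exact (Finset.mem_sdiff.mp hb).2 (Finset.mem_inter.mp ha).1
    have hU : (X ∩ Y) ∪ (Y \ X) = Y := by
      ext x; simp [Finset.mem_sdiff]; tauto
    have := growB f hf (X ∩ Y) (Y \ X) hdisj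
    rw [hU] at this; linarith
  have hX : ∑ j ∈ X \ Y, (f X - f (X.erase j)) ≤ f X - f (X ∩ Y) := by
    have := growC f hf X (X \ Y) (Finset.sdiff_subset)
    have hI : X \ (X \ Y) = X ∩ Y := Finset.sdiff_sdiff_self_left X Y
    rw [hI] at this; exact this
  -- rewrite g sums
  have hgY : ∑ j ∈ Y \ X, g j = ∑ j ∈ Y \ X, (f {j} - f ∅) := by
    apply Finset.sum_congr rfl
    intro j hj
    have : j ∉ X := (Finset.mem_sdiff.mp hj).2
    rw [hg j, if_neg this, LawfulSingleton.insert_empty_eq]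
  have hgX : ∑ j ∈ X \ Y, g j = ∑ j ∈ X \ Y, (f X - f (X.erase j)) := by
    apply Finset.sum_congr rfl
    intro j hj
    have hjX : j ∈ X := (Finset.mem_sdiff.mp hj).1
    rw [hg j, if_pos hjX, Finset.insert_erase hjX]
  have hsplitY : ∑ i ∈ Y, g i = ∑ i ∈ Y ∩ X, g i + ∑ i ∈ Y \ X, g i :=
    (Finset.sum_inter_add_sum_sdiff Y X g).symm
  have hsplitX : ∑ i ∈ X, g i = ∑ i ∈ X ∩ Y, g i + ∑ i ∈ X \ Y, g i :=
    (Finset.sum_inter_add_sum_sdiff X Y g).symm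
  have hcomm : ∑ i ∈ Y ∩ X, g i = ∑ i ∈ X ∩ Y, g i := by
    rw [Finset.inter_comm]
  linarith [hY, hX, hgY ▸ hY, hgX ▸ hX]
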